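/- Let y > 0 and t be real numbers with t ≥ e^{2/e}·y, where e is Euler's number. Then (y/t)^w ≤ 1/w² for every positive integer w, and consequently Σ_{w=1}^{∞} (y/t)^w ≤ π²/6. -/

import Mathlib

open Real

lemma log_le_div_e {x : ℝ} (hx : 0 < x) : Real.log x ≤ x / Real.exp 1 := by
  have h := Real.log_le_sub_one_of_pos (x := x / Real.exp 1) (by positivity)
  rw [Real.log_div (ne_of_gt hx) (ne_of_gt (Real.exp_pos 1)), Real.log_exp] at h
  linarith

/-- If `y > 0` and `t ≥ e^{2/e}·y`, then `(y/t)^w ≤ 1/w²` for every positive integer `w`,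
and consequently `Σ_{w=1}^{∞} (y/t)^w ≤ π²/6`. -/
theorem geometric_le_basel
    (y t : ℝ) (hy : 0 < y) (ht : Real.exp (2 / Real.exp 1) * y ≤ t) :
    (∀ w : ℕ, 1 ≤ w → (y / t) ^ w ≤ 1 / (w : ℝ) ^ 2) ∧
    (∑' w : ℕ, (y / t) ^ (w + 1)) ≤ Real.pi ^ 2 / 6 := by
  have ht0 : 0 < t := lt_of_lt_of_le (by positivity) ht
  have hq0 : 0 < y / t := by positivity
  have hq : y / t ≤ Real.exp (-(2 / Real.exp 1)) := by
    rw [Real.exp_neg, div_le_iff₀ ht0, inv_mul_eq_div, le_div_iff₀ (Real.exp_pos _)]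
    linarith
  have key : ∀ w : ℕ, 1 ≤ w → (y / t) ^ w ≤ 1 / (w : ℝ) ^ 2 := by
    intro w hw
    have hw0 : (0 : ℝ) < w := by exact_mod_cast hw
    have h1 : (y / t) ^ w ≤ Real.exp (-(2 / Real.exp 1)) ^ w :=
      pow_le_pow_left₀ hq0.le hq w
    rw [← Real.exp_nat_mul] at h1
    refine h1.trans ?_
    have hlog : Real.log w ≤ (w : ℝ) / Real.exp 1 := log_le_div_e hw0
    have h2 : (w : ℝ) * -(2 / Real.exp 1) ≤ Real.log (1 / (w : ℝ) ^ 2) := by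
      rw [one_div, Real.log_inv, Real.log_pow]
      rw [div_eq_mul_inv] at hlog ⊢
      push_cast
      nlinarith [hlog]
    calc Real.exp ((w : ℝ) * -(2 / Real.exp 1)) ≤ Real.exp (Real.log (1 / (w:ℝ)^2)) :=
          Real.exp_le_exp.mpr h2
      _ = 1 / (w : ℝ) ^ 2 := Real.exp_log (by positivity)
  refine ⟨key, ?_⟩
  have hq1 : y / t < 1 := lt_of_le_of_lt hq (by
    rw [Real.exp_lt_one_iff]; exact neg_lt_zero.mpr (by positivity))
  have hsum1 : Summable (fun w : ℕ => (y / t) ^ (w + 1)) := by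
    have := summable_geometric_of_lt_one hq0.le hq1
    exact (summable_nat_add_iff 1).mpr this
  have hbasel : HasSum (fun w : ℕ => 1 / ((w : ℝ) + 1) ^ 2) (Real.pi ^ 2 / 6) := by
    have h := (hasSum_nat_add_iff' (f := fun n : ℕ => (1 : ℝ) / (n : ℝ) ^ 2) 1).mpr
      hasSum_zeta_two
    have : Real.pi ^ 2 / 6 - ∑ i ∈ Finset.range 1, (1:ℝ) / (i:ℝ) ^ 2 = Real.pi ^ 2 / 6 := by
      simp
    rw [this] at h
    convert h using 2 with w
    · rfl
    push_cast
    ring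
  calc (∑' w : ℕ, (y / t) ^ (w + 1)) ≤ ∑' w : ℕ, 1 / ((w : ℝ) + 1) ^ 2 := by
        refine Summable.tsum_le_tsum (fun w => ?_) hsum1 hbasel.summable
        have := key (w + 1) (Nat.le_add_left 1 w)
        push_cast at this ⊢
        exact this
    _ = Real.pi ^ 2 / 6 := hbasel.tsum_eq
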